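/- Let φ(t) be a formal power series in one variable over ℂ and ρ(t) a formal power series with ρ(0) = 0 and ρ'(0) ≠ 0 such that φ ∘ ρ = φ. Then either φ is constant, or ρ has finite order under composition. -/

import Mathlib

noncomputable section

/-- Composition of one-variable formal power series: `compP f g = f ∘ g` (substitute `g`
into `f`); this agrees with formal substitution when `g` has zero constant term. -/
def compP (f g : PowerSeries ℂ) : PowerSeries ℂ :=
  PowerSeries.mk fun n =>
    ∑ j ∈ Finset.range (n + 1), PowerSeries.coeff j f * PowerSeries.coeff n (g ^ j)

/-- Compositional iterate of a one-variable formal power series. -/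
def iterP (g : PowerSeries ℂ) : ℕ → PowerSeries ℂ
  | 0 => PowerSeries.X
  | m + 1 => compP g (iterP g m)

open PowerSeries Finset

lemma coeff_compP (f g : PowerSeries ℂ) (n : ℕ) :
    coeff n (compP f g) = ∑ j ∈ range (n + 1), coeff j f * coeff n (g ^ j) :=
  coeff_mk _ _

lemma coeff_pow_zero {g : PowerSeries ℂ} (hg : constantCoeff g = 0) {j n : ℕ}
    (h : n < j) : coeff n (g ^ j) = 0 := by
  have : (X : PowerSeries ℂ) ^ j ∣ g ^ j := pow_dvd_pow_of_dvd (X_dvd_iff.mpr hg) j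
  exact X_pow_dvd_iff.mp this n h

lemma coeff_pow_self {g : PowerSeries ℂ} (hg : constantCoeff g = 0) (j : ℕ) :
    coeff j (g ^ j) = (coeff 1 g) ^ j := by
  induction j with
  | zero => simp
  | succ j ih =>
    rw [pow_succ, PowerSeries.coeff_mul, Finset.sum_eq_single (j, 1)]
    · rw [ih, pow_succ]
    · intro p hp hne
      rw [Finset.HasAntidiagonal.mem_antidiagonal] at hp
      rcases lt_trichotomy p.1 j with h | h | h
      · rw [coeff_pow_zero hg h, zero_mul]
      · exfalso; apply hne
        have : p.2 = 1 := by omega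
        exact Prod.ext h this
      · have : p.2 = 0 := by omega
        rw [this, coeff_zero_eq_constantCoeff, hg, mul_zero]
    · intro h; exfalso; apply h; rw [Finset.HasAntidiagonal.mem_antidiagonal]

lemma coeff_compP_pad {g : PowerSeries ℂ} (hg : constantCoeff g = 0) (f : PowerSeries ℂ)
    {n N : ℕ} (hN : n + 1 ≤ N) :
    coeff n (compP f g) = ∑ j ∈ range N, coeff j f * coeff n (g ^ j) := by
  rw [coeff_compP]
  apply Finset.sum_subset (Finset.range_subset_range.mpr hN)
  intro j hj hj'
  rw [Finset.mem_range] at hj hj'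
  rw [coeff_pow_zero hg (by omega), mul_zero]

lemma sum_triangle {M : Type*} [AddCommMonoid M] (n : ℕ) (F : ℕ × ℕ → M)
    (hF : ∀ p : ℕ × ℕ, n < p.1 + p.2 → F p = 0) :
    ∑ j ∈ range (n + 1), ∑ p ∈ antidiagonal j, F p
      = ∑ p ∈ range (n + 1) ×ˢ range (n + 1), F p := by
  rw [Finset.sum_sigma']
  rw [show ∑ p ∈ range (n + 1) ×ˢ range (n + 1), F p
      = ∑ p ∈ (range (n + 1) ×ˢ range (n + 1)).filter (fun p => p.1 + p.2 ≤ n), F p from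
    (Finset.sum_subset (Finset.filter_subset _ _) (fun p hp hp' => by
      refine hF p ?_
      rw [Finset.mem_filter, not_and] at hp'
      exact lt_of_not_ge (hp' hp))).symm]
  refine Finset.sum_nbij' (fun x => x.2) (fun p => ⟨p.1 + p.2, p⟩) ?_ ?_ ?_ ?_ ?_
  · rintro ⟨j, a, b⟩ hx
    simp only [Finset.mem_sigma, Finset.mem_range, Finset.HasAntidiagonal.mem_antidiagonal] at hx
    simp only [Finset.mem_filter, Finset.mem_product, Finset.mem_range]
    omega
  · rintro ⟨a, b⟩ hp
    simp only [Finset.mem_filter, Finset.mem_product, Finset.mem_range] at hp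
    exact Finset.mem_sigma.mpr ⟨Finset.mem_range.mpr (show a + b < n + 1 by omega),
      Finset.HasAntidiagonal.mem_antidiagonal.mpr rfl⟩
  · rintro ⟨j, a, b⟩ hx
    simp only [Finset.mem_sigma, Finset.mem_range, Finset.HasAntidiagonal.mem_antidiagonal] at hx
    exact Sigma.ext hx.2 (by simp)
  · rintro p _; rfl
  · rintro ⟨j, p⟩ _; rfl

lemma compP_mul {g : PowerSeries ℂ} (hg : constantCoeff g = 0) (f1 f2 : PowerSeries ℂ) :
    compP (f1 * f2) g = compP f1 g * compP f2 g := by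
  ext n
  have key : ∀ p ∈ antidiagonal n,
      coeff p.1 (compP f1 g) * coeff p.2 (compP f2 g)
        = ∑ a ∈ range (n + 1), ∑ b ∈ range (n + 1),
            coeff a f1 * coeff b f2 * (coeff p.1 (g ^ a) * coeff p.2 (g ^ b)) := by
    intro p hp
    rw [Finset.HasAntidiagonal.mem_antidiagonal] at hp
    rw [coeff_compP_pad hg f1 (N := n + 1) (by omega),
        coeff_compP_pad hg f2 (N := n + 1) (by omega), Finset.sum_mul_sum]
    exact Finset.sum_congr rfl fun a _ => Finset.sum_congr rfl fun b _ => by ring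
  rw [PowerSeries.coeff_mul, Finset.sum_congr rfl key, Finset.sum_comm]
  rw [coeff_compP]
  have lhs : ∑ j ∈ range (n + 1), coeff j (f1 * f2) * coeff n (g ^ j)
      = ∑ j ∈ range (n + 1), ∑ p ∈ antidiagonal j,
          coeff p.1 f1 * coeff p.2 f2 * coeff n (g ^ (p.1 + p.2)) := by
    refine Finset.sum_congr rfl fun j _ => ?_
    rw [PowerSeries.coeff_mul, Finset.sum_mul]
    refine Finset.sum_congr rfl fun p hp => ?_
    rw [Finset.HasAntidiagonal.mem_antidiagonal] at hp
    rw [hp]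
  rw [lhs, sum_triangle n (fun p => coeff p.1 f1 * coeff p.2 f2 * coeff n (g ^ (p.1 + p.2)))
    (fun p hp => by beta_reduce; rw [coeff_pow_zero hg hp, mul_zero]), Finset.sum_product]
  refine Finset.sum_congr rfl fun a _ => ?_
  rw [Finset.sum_comm]
  refine Finset.sum_congr rfl fun b _ => ?_
  rw [pow_add, PowerSeries.coeff_mul, Finset.mul_sum]

lemma compP_one (g : PowerSeries ℂ) : compP 1 g = 1 := by
  ext n
  rw [coeff_compP, Finset.sum_eq_single 0]
  · simp
  · intro j hj hne
    rw [show coeff j (1 : PowerSeries ℂ) = 0 by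
      simpa [hne] using PowerSeries.coeff_one (R := ℂ) j, zero_mul]
  · intro h; exact absurd (Finset.mem_range.mpr (by omega)) h

lemma compP_pow {g : PowerSeries ℂ} (hg : constantCoeff g = 0) (f : PowerSeries ℂ) (i : ℕ) :
    compP (f ^ i) g = (compP f g) ^ i := by
  induction i with
  | zero => simpa using compP_one g
  | succ i ih => rw [pow_succ, compP_mul hg, ih, pow_succ]

lemma compP_assoc {g h : PowerSeries ℂ} (hg : constantCoeff g = 0)
    (hh : constantCoeff h = 0) (f : PowerSeries ℂ) :
    compP (compP f g) h = compP f (compP g h) := by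
  ext n
  rw [coeff_compP, coeff_compP]
  have lhs : ∑ j ∈ range (n + 1), coeff j (compP f g) * coeff n (h ^ j)
      = ∑ j ∈ range (n + 1), ∑ i ∈ range (n + 1),
          coeff i f * coeff j (g ^ i) * coeff n (h ^ j) := by
    refine Finset.sum_congr rfl fun j hj => ?_
    rw [Finset.mem_range] at hj
    rw [coeff_compP_pad hg f (N := n + 1) (by omega), Finset.sum_mul]
  rw [lhs, Finset.sum_comm]
  refine Finset.sum_congr rfl fun i _ => ?_
  rw [← compP_pow hh g i, coeff_compP, Finset.mul_sum]
  refine Finset.sum_congr rfl fun j _ => by ring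

lemma compP_X (f : PowerSeries ℂ) : compP f X = f := by
  ext n
  rw [coeff_compP, Finset.sum_eq_single n]
  · rw [PowerSeries.coeff_X_pow]
    simp
  · intro j hj hne
    rw [PowerSeries.coeff_X_pow, if_neg (fun h => hne h.symm), mul_zero]
  · intro h; exact absurd (Finset.mem_range.mpr (by omega)) h

lemma constantCoeff_compP (f g : PowerSeries ℂ) :
    PowerSeries.constantCoeff (compP f g) = PowerSeries.constantCoeff f := by
  rw [← coeff_zero_eq_constantCoeff_apply, ← coeff_zero_eq_constantCoeff_apply, coeff_compP]
  simp

lemma coeff_one_compP (f g : PowerSeries ℂ) :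
    coeff 1 (compP f g) = coeff 1 f * coeff 1 g := by
  rw [coeff_compP]
  rw [show (1 : ℕ) + 1 = 2 from rfl, Finset.sum_range_succ, Finset.sum_range_one]
  simp [PowerSeries.coeff_one]

lemma iterP_constantCoeff {ρ : PowerSeries ℂ} (hρ0 : constantCoeff ρ = 0) (m : ℕ) :
    constantCoeff (iterP ρ m) = 0 := by
  cases m with
  | zero => simp [iterP]
  | succ m => rw [iterP, constantCoeff_compP]; exact hρ0

lemma iterP_coeff_one {ρ : PowerSeries ℂ} (m : ℕ) :
    coeff 1 (iterP ρ m) = (coeff 1 ρ) ^ m := by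
  induction m with
  | zero => simp [iterP]
  | succ m ih => rw [iterP, coeff_one_compP, ih, pow_succ]; ring

lemma iterP_invariant {φ ρ : PowerSeries ℂ} (hρ0 : constantCoeff ρ = 0)
    (hinv : compP φ ρ = φ) (m : ℕ) : compP φ (iterP ρ m) = φ := by
  induction m with
  | zero => exact compP_X φ
  | succ m ih =>
    rw [iterP, ← compP_assoc hρ0 (iterP_constantCoeff hρ0 m), hinv, ih]

/-- If a formal power series φ is invariant under an invertible formal change of variable ρ
(ρ(0) = 0, ρ'(0) ≠ 0), i.e. φ ∘ ρ = φ, then either φ is constant or ρ has finite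
compositional order. -/
theorem const_or_finite_order_of_invariant (φ ρ : PowerSeries ℂ)
    (hρ0 : PowerSeries.constantCoeff ρ = 0)
    (hρ1 : PowerSeries.coeff 1 ρ ≠ 0)
    (hinv : compP φ ρ = φ) :
    (∃ c : ℂ, φ = PowerSeries.C c) ∨ ∃ m : ℕ, 0 < m ∧ iterP ρ m = PowerSeries.X := by
  by_cases hc : ∀ m : ℕ, m ≠ 0 → coeff m φ = 0
  · left
    refine ⟨constantCoeff φ, ?_⟩
    ext m
    cases m with
    | zero => simp
    | succ m => rw [hc (m + 1) (by omega), PowerSeries.coeff_C, if_neg (by omega)]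
  · right
    push_neg at hc
    classical
    set a : ℂ := coeff 1 ρ with ha_def
    obtain ⟨n, hn0, hφn, hmin⟩ :
        ∃ n, n ≠ 0 ∧ coeff n φ ≠ 0 ∧ ∀ m, m < n → m ≠ 0 → coeff m φ = 0 := by
      refine ⟨Nat.find hc, (Nat.find_spec hc).1, (Nat.find_spec hc).2, ?_⟩
      intro m hm hm0
      by_contra h
      have : Nat.find hc ≤ m := Nat.find_le ⟨hm0, h⟩
      omega
    -- a ^ n = 1
    have han : a ^ n = 1 := by
      have hco := congrArg (coeff n) hinv
      rw [coeff_compP, Finset.sum_eq_single n] at hco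
      · rw [coeff_pow_self hρ0 n] at hco
        have : coeff n φ * (a ^ n - 1) = 0 := by rw [mul_sub]; rw [hco]; ring
        rcases mul_eq_zero.mp this with h | h
        · exact absurd h hφn
        · linear_combination h
      · intro j hj hne
        rw [Finset.mem_range] at hj
        rcases Nat.eq_zero_or_pos j with rfl | hj1
        · rw [pow_zero, show coeff n (1 : PowerSeries ℂ) = 0 by
            simpa [hn0] using PowerSeries.coeff_one (R := ℂ) n, mul_zero]
        · rw [hmin j (by omega) (by omega), zero_mul]
      · intro h; exact absurd (Finset.mem_range.mpr (by omega)) h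
    set σ : PowerSeries ℂ := iterP ρ n with hσ_def
    refine ⟨n, by omega, ?_⟩
    by_contra hne
    set τ : PowerSeries ℂ := σ - X with hτ_def
    have hτ : τ ≠ 0 := sub_ne_zero.mpr hne
    have hex : ∃ k, coeff k τ ≠ 0 := by
      by_contra h
      push_neg at h
      exact hτ (PowerSeries.ext fun k => by rw [h k, map_zero])
    obtain ⟨k, hck, hkmin⟩ : ∃ k, coeff k τ ≠ 0 ∧ ∀ m, m < k → coeff m τ = 0 := by
      refine ⟨Nat.find hex, Nat.find_spec hex, ?_⟩
      intro m hm
      by_contra h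
      have : Nat.find hex ≤ m := Nat.find_le h
      omega
    have hσ0 : constantCoeff σ = 0 := iterP_constantCoeff hρ0 n
    have hσ1 : coeff 1 σ = 1 := by rw [hσ_def, iterP_coeff_one, ← ha_def, han]
    have hτ0 : coeff 0 τ = 0 := by
      rw [hτ_def, map_sub, coeff_zero_eq_constantCoeff_apply, hσ0]
      simp
    have hτ1 : coeff 1 τ = 0 := by
      rw [hτ_def, map_sub, hσ1, PowerSeries.coeff_X, if_pos rfl, sub_self]
    have hk2 : 2 ≤ k := by
      rcases Nat.lt_or_ge k 2 with h | h
      · interval_cases k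
        · exact absurd hτ0 hck
        · exact absurd hτ1 hck
      · exact h
    have hτdvd : (X : PowerSeries ℂ) ^ k ∣ τ := X_pow_dvd_iff.mpr hkmin
    obtain ⟨n', rfl⟩ : ∃ n', n = n' + 1 := ⟨n - 1, by omega⟩
    set N : ℕ := n' + k with hN_def
    -- the geometric sum
    set S : PowerSeries ℂ := ∑ i ∈ range (n' + 1), σ ^ i * X ^ (n' + 1 - 1 - i) with hS_def
    have hfact : σ ^ (n' + 1) - X ^ (n' + 1) = S * τ := by
      rw [hS_def, hτ_def]; exact (geom_sum₂_mul σ X (n' + 1)).symm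
    have hSdvd : (X : PowerSeries ℂ) ^ n' ∣ S := by
      refine Finset.dvd_sum fun i hi => ?_
      rw [Finset.mem_range] at hi
      have h1 : (X : PowerSeries ℂ) ^ i ∣ σ ^ i := pow_dvd_pow_of_dvd (X_dvd_iff.mpr hσ0) i
      have : (X : PowerSeries ℂ) ^ n' = X ^ i * X ^ (n' + 1 - 1 - i) := by
        rw [← pow_add]; congr 1; omega
      rw [this]
      exact mul_dvd_mul h1 dvd_rfl
    -- coeff n' S = n' + 1
    have hcoeffS : coeff n' S = (n' + 1 : ℕ) := by
      rw [hS_def, map_sum]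
      have : ∀ i ∈ range (n' + 1), coeff n' (σ ^ i * X ^ (n' + 1 - 1 - i)) = 1 := by
        intro i hi
        rw [Finset.mem_range] at hi
        rw [PowerSeries.coeff_mul, Finset.sum_eq_single (i, n' - i)]
        · rw [coeff_pow_self hσ0, hσ1, one_pow, PowerSeries.coeff_X_pow,
            if_pos (by omega), mul_one]
        · intro p hp hpne
          rw [Finset.HasAntidiagonal.mem_antidiagonal] at hp
          rw [PowerSeries.coeff_X_pow]
          rcases eq_or_ne p.2 (n' + 1 - 1 - i) with h2 | h2
          · exfalso; exact hpne (Prod.ext (by omega) (by omega))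
          · rw [if_neg h2, mul_zero]
        · intro h
          exact absurd (Finset.HasAntidiagonal.mem_antidiagonal.mpr (by omega)) h
      rw [Finset.sum_congr rfl this, Finset.sum_const, Finset.card_range, nsmul_eq_mul, mul_one]
    -- coeff N (σ^n - X^n) = (n'+1) * c
    have hDn : coeff N (σ ^ (n' + 1) - X ^ (n' + 1)) = (n' + 1 : ℕ) * coeff k τ := by
      rw [hfact, PowerSeries.coeff_mul, Finset.sum_eq_single (n', k)]
      · rw [hcoeffS]
      · intro p hp hpne
        rw [Finset.HasAntidiagonal.mem_antidiagonal] at hp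
        rcases Nat.lt_or_ge p.2 k with h2 | h2
        · rw [hkmin p.2 h2, mul_zero]
        · have h1 : p.1 < n' := by
            rcases Nat.lt_or_ge p.1 n' with h | h
            · exact h
            · exfalso; exact hpne (Prod.ext (by omega) (by omega))
          rw [X_pow_dvd_iff.mp hSdvd p.1 h1, zero_mul]
      · intro h
        exact absurd (Finset.HasAntidiagonal.mem_antidiagonal.mpr (by omega)) h
    -- vanishing for j > n
    have hDhigh : ∀ j, n' + 1 < j → coeff N (σ ^ j - X ^ j) = 0 := by
      intro j hj
      have hfj : σ ^ j - X ^ j = (∑ i ∈ range j, σ ^ i * X ^ (j - 1 - i)) * τ := by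
        rw [hτ_def]; exact (geom_sum₂_mul σ X j).symm
      have hdvd : (X : PowerSeries ℂ) ^ (j - 1 + k) ∣ σ ^ j - X ^ j := by
        rw [hfj, pow_add]
        refine mul_dvd_mul ?_ hτdvd
        refine Finset.dvd_sum fun i hi => ?_
        rw [Finset.mem_range] at hi
        have h1 : (X : PowerSeries ℂ) ^ i ∣ σ ^ i := pow_dvd_pow_of_dvd (X_dvd_iff.mpr hσ0) i
        have : (X : PowerSeries ℂ) ^ (j - 1) = X ^ i * X ^ (j - 1 - i) := by
          rw [← pow_add]; congr 1; omega
        rw [this]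
        exact mul_dvd_mul h1 dvd_rfl
      exact X_pow_dvd_iff.mp hdvd N (by omega)
    -- main coefficient identity
    have hinvσ : compP φ σ = φ := iterP_invariant hρ0 hinv (n' + 1)
    have key : ∑ j ∈ range (N + 1), coeff j φ * coeff N (σ ^ j - X ^ j) = 0 := by
      have h1 : coeff N (compP φ σ) = coeff N φ := by rw [hinvσ]
      have h2 : coeff N (compP φ X) = coeff N φ := by rw [compP_X]
      rw [coeff_compP] at h1 h2
      calc ∑ j ∈ range (N + 1), coeff j φ * coeff N (σ ^ j - X ^ j)
          = ∑ j ∈ range (N + 1), (coeff j φ * coeff N (σ ^ j)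
              - coeff j φ * coeff N ((X : PowerSeries ℂ) ^ j)) := by
            refine Finset.sum_congr rfl fun j _ => ?_
            rw [map_sub, mul_sub]
        _ = 0 := by rw [Finset.sum_sub_distrib, h1, h2, sub_self]
    rw [Finset.sum_eq_single (n' + 1)] at key
    · rw [hDn] at key
      rcases mul_eq_zero.mp key with h | h
      · exact hφn h
      · rcases mul_eq_zero.mp h with h' | h'
        · exact absurd h' (Nat.cast_ne_zero.mpr (by omega))
        · exact hck h'
    · intro j hj hne
      rw [Finset.mem_range] at hj
      rcases Nat.lt_or_ge j (n' + 1) with h | h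
      · rcases Nat.eq_zero_or_pos j with rfl | hj1
        · simp
        · rw [hmin j h (by omega), zero_mul]
      · rw [hDhigh j (by omega), mul_zero]
    · intro h
      exact absurd (Finset.mem_range.mpr (by omega)) h

end
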